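/- In the inverse braid monoid IB_n, an element m satisfies ε_i m = ε_i if and only if m ε_{τ(m)(i)} = ε_{τ(m)(i)}, where τ : IB_n → I_n is the canonical projection to the symmetric inverse monoid. -/

import Mathlib

/-- Generators of the inverse braid monoid on `n` strands: `s i` is the Artin
generator `σ_{i+1}` (0-based `i`), `si i` is its formal inverse, and `e a` is the
idempotent `ε_{a+1}` (the trivial partial braid with the `(a+1)`-st string removed). -/
inductive IBGen (n : ℕ) : Type
  | s (i : Fin (n - 1))
  | si (i : Fin (n - 1))
  | e (a : Fin n)

/-- The defining relations of the inverse braid monoid `IB_n`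
(braid relations, invertibility of the `σ_i`, and the Easdown–Lavers/Gilbert
relations between the `ε` and the `σ`). Indices: the generator `s i` crosses the
(0-based) strands `i` and `i+1`; `e a` deletes the (0-based) strand `a`. -/
inductive ibRel (n : ℕ) : FreeMonoid (IBGen n) → FreeMonoid (IBGen n) → Prop
  | braid_comm (i j : Fin (n - 1)) (h : (i : ℕ) + 1 < (j : ℕ)) :
      ibRel n (.of (.s i) * .of (.s j)) (.of (.s j) * .of (.s i))
  | braid (i j : Fin (n - 1)) (h : (i : ℕ) + 1 = (j : ℕ)) :
      ibRel n (.of (.s i) * .of (.s j) * .of (.s i)) (.of (.s j) * .of (.s i) * .of (.s j))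
  | inv_right (i : Fin (n - 1)) : ibRel n (.of (.s i) * .of (.si i)) 1
  | inv_left (i : Fin (n - 1)) : ibRel n (.of (.si i) * .of (.s i)) 1
  | e_comm (a : Fin n) (i : Fin (n - 1)) (h : (i : ℕ) + 2 ≤ (a : ℕ) ∨ (a : ℕ) + 2 ≤ (i : ℕ)) :
      ibRel n (.of (.e a) * .of (.s i)) (.of (.s i) * .of (.e a))
  | e_s (i : Fin (n - 1)) (a b : Fin n) (ha : (a : ℕ) = (i : ℕ)) (hb : (b : ℕ) = (i : ℕ) + 1) :
      ibRel n (.of (.e a) * .of (.s i)) (.of (.s i) * .of (.e b))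
  | e_s' (i : Fin (n - 1)) (a b : Fin n) (ha : (a : ℕ) = (i : ℕ)) (hb : (b : ℕ) = (i : ℕ) + 1) :
      ibRel n (.of (.e b) * .of (.s i)) (.of (.s i) * .of (.e a))
  | idem (a : Fin n) : ibRel n (.of (.e a) * .of (.e a)) (.of (.e a))
  | e_ss (i : Fin (n - 1)) (b : Fin n) (hb : (b : ℕ) = (i : ℕ) + 1) :
      ibRel n (.of (.e b) * .of (.s i) * .of (.s i)) (.of (.e b))
  | ss_e (i : Fin (n - 1)) (b : Fin n) (hb : (b : ℕ) = (i : ℕ) + 1) :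
      ibRel n (.of (.s i) * .of (.s i) * .of (.e b)) (.of (.e b))
  | ee_s (i : Fin (n - 1)) (a b : Fin n) (ha : (a : ℕ) = (i : ℕ)) (hb : (b : ℕ) = (i : ℕ) + 1) :
      ibRel n (.of (.e a) * .of (.e b) * .of (.s i)) (.of (.e a) * .of (.e b))
  | s_ee (i : Fin (n - 1)) (a b : Fin n) (ha : (a : ℕ) = (i : ℕ)) (hb : (b : ℕ) = (i : ℕ) + 1) :
      ibRel n (.of (.s i) * .of (.e a) * .of (.e b)) (.of (.e a) * .of (.e b))

/-- The congruence on the free monoid generated by the defining relations of `IB_n`. -/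
def ibCon (n : ℕ) : Con (FreeMonoid (IBGen n)) := conGen (ibRel n)

/-- The inverse braid monoid `IB_n` of partial braids on `n` strands,
given by the Easdown–Lavers/Gilbert presentation. -/
def IB (n : ℕ) : Type := (ibCon n).Quotient

instance (n : ℕ) : Monoid (IB n) := by unfold IB; infer_instance

/-- The generator `σ_{i+1}` (0-based `i`) of `IB_n`. -/
def ibS (n : ℕ) (i : Fin (n - 1)) : IB n := (ibCon n).mk' (.of (.s i))

/-- The inverse generator `σ_{i+1}^{-1}` (0-based `i`) of `IB_n`. -/
def ibSi (n : ℕ) (i : Fin (n - 1)) : IB n := (ibCon n).mk' (.of (.si i))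

/-- The idempotent generator `ε_{a+1}` (0-based `a`) of `IB_n`. -/
def ibE (n : ℕ) (a : Fin n) : IB n := (ibCon n).mk' (.of (.e a))
/-- A partial injective map on `Fin n`: `toFun i = some j` means `i ↦ j`,
`toFun i = none` means that the map is undefined at `i`. -/
@[ext]
structure PartialInj (n : ℕ) : Type where
  toFun : Fin n → Option (Fin n)
  inj : ∀ i j a, toFun i = some a → toFun j = some a → i = j

/-- The symmetric inverse monoid `I_n`: partial injections of `Fin n` under
composition, `(p * q) i = p (q i)` (defined where it makes sense). -/
instance (n : ℕ) : Monoid (PartialInj n) where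
  mul p q := ⟨fun i => (q.toFun i).bind p.toFun, by
    intro i j a hi hj
    rcases Option.bind_eq_some_iff.mp hi with ⟨b, hb, hpb⟩
    rcases Option.bind_eq_some_iff.mp hj with ⟨c, hc, hpc⟩
    have hbc : b = c := p.inj _ _ _ hpb hpc
    subst hbc
    exact q.inj _ _ _ hb hc⟩
  one := ⟨fun i => some i, fun i j a hi hj => by
    simp only [Option.some.injEq] at hi hj; omega⟩
  mul_assoc p q r := by
    apply PartialInj.ext
    funext i
    show (r.toFun i).bind (fun x => (q.toFun x).bind p.toFun) =
      ((r.toFun i).bind q.toFun).bind p.toFun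
    exact (Option.bind_assoc _ _ _).symm
  one_mul p := by
    apply PartialInj.ext
    funext i
    show (p.toFun i).bind (fun j => some j) = p.toFun i
    cases p.toFun i <;> rfl
  mul_one p := by
    apply PartialInj.ext
    funext i
    show (some i).bind p.toFun = p.toFun i
    rfl

/-- The (total) partial injection underlying the braid generator `σ_{i+1}`:
the transposition of `i` and `i+1` (0-based). -/
def swapPerm (n : ℕ) (i : Fin (n - 1)) : Equiv.Perm (Fin n) :=
  Equiv.swap ⟨(i : ℕ), by have := i.isLt; omega⟩ ⟨(i : ℕ) + 1, by have := i.isLt; omega⟩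

def swapPI (n : ℕ) (i : Fin (n - 1)) : PartialInj n :=
  ⟨fun x => some (swapPerm n i x), by
    intro x y a hx hy
    try dsimp only at hx hy
    exact (swapPerm n i).injective
      ((Option.some.inj hx).trans (Option.some.inj hy).symm)⟩

/-- The partial injection underlying `ε_{a+1}`: the identity, undefined at `a`
(0-based). -/
def dropPI (n : ℕ) (a : Fin n) : PartialInj n :=
  ⟨fun x => if x = a then none else some x, by
    intro x y c hx hy
    try dsimp only at hx hy
    split_ifs at hx hy <;> simp_all⟩

/-- The domain of a partial injection. -/
def piDom (n : ℕ) (p : PartialInj n) : Finset (Fin n) :=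
  Finset.univ.filter fun i => (p.toFun i).isSome

/-- The range (image) of a partial injection. -/
def piRan (n : ℕ) (p : PartialInj n) : Finset (Fin n) :=
  Finset.univ.filter fun j => ∃ i, p.toFun i = some j



namespace IBAux

open FreeMonoid

variable {n : ℕ}

private def mkIB (w : FreeMonoid (IBGen n)) : IB n := (ibCon n).mk' w

private lemma mkIB_mul (x y : FreeMonoid (IBGen n)) :
    mkIB (x * y) = mkIB x * mkIB y := map_mul (ibCon n).mk' x y

private lemma mkIB_one : mkIB (1 : FreeMonoid (IBGen n)) = 1 := map_one (ibCon n).mk'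

private lemma rel_eq {x y : FreeMonoid (IBGen n)} (h : ibRel n x y) :
    (ibCon n).mk' x = (ibCon n).mk' y :=
  (Con.eq _).mpr (ConGen.Rel.of _ _ h)

private lemma q_braid (i j : Fin (n - 1)) (h : (i : ℕ) + 1 = (j : ℕ)) :
    ibS n i * ibS n j * ibS n i = ibS n j * ibS n i * ibS n j := by
  have h' := rel_eq (ibRel.braid (n := n) i j h)
  simp only [map_mul] at h'; exact h'

private lemma q_Ssi (i : Fin (n - 1)) : ibS n i * ibSi n i = 1 := by
  have h' := rel_eq (ibRel.inv_right (n := n) i)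
  simp only [map_mul, map_one] at h'; exact h'

private lemma q_siS (i : Fin (n - 1)) : ibSi n i * ibS n i = 1 := by
  have h' := rel_eq (ibRel.inv_left (n := n) i)
  simp only [map_mul, map_one] at h'; exact h'

private lemma q_far (a : Fin n) (i : Fin (n - 1))
    (h : (i : ℕ) + 2 ≤ (a : ℕ) ∨ (a : ℕ) + 2 ≤ (i : ℕ)) :
    ibE n a * ibS n i = ibS n i * ibE n a := by
  have h' := rel_eq (ibRel.e_comm (n := n) a i h)
  simp only [map_mul] at h'; exact h'

private lemma q_lo (i : Fin (n - 1)) (a b : Fin n) (ha : (a : ℕ) = (i : ℕ))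
    (hb : (b : ℕ) = (i : ℕ) + 1) : ibE n a * ibS n i = ibS n i * ibE n b := by
  have h' := rel_eq (ibRel.e_s (n := n) i a b ha hb)
  simp only [map_mul] at h'; exact h'

private lemma q_hi (i : Fin (n - 1)) (a b : Fin n) (ha : (a : ℕ) = (i : ℕ))
    (hb : (b : ℕ) = (i : ℕ) + 1) : ibE n b * ibS n i = ibS n i * ibE n a := by
  have h' := rel_eq (ibRel.e_s' (n := n) i a b ha hb)
  simp only [map_mul] at h'; exact h'

private lemma q_eeS (i : Fin (n - 1)) (a b : Fin n) (ha : (a : ℕ) = (i : ℕ))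
    (hb : (b : ℕ) = (i : ℕ) + 1) :
    ibE n a * ibE n b * ibS n i = ibE n a * ibE n b := by
  have h' := rel_eq (ibRel.ee_s (n := n) i a b ha hb)
  simp only [map_mul] at h'; exact h'

private lemma q_See (i : Fin (n - 1)) (a b : Fin n) (ha : (a : ℕ) = (i : ℕ))
    (hb : (b : ℕ) = (i : ℕ) + 1) :
    ibS n i * ibE n a * ibE n b = ibE n a * ibE n b := by
  have h' := rel_eq (ibRel.s_ee (n := n) i a b ha hb)
  simp only [map_mul] at h'; exact h'

private lemma m22 {a b c d : IB n} (h : a * b = c * d) (x : IB n) :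
    a * (b * x) = c * (d * x) := by rw [← mul_assoc, h, mul_assoc]

private lemma m33 {a b c d e f : IB n} (h : a * b * c = d * e * f) (x : IB n) :
    a * (b * (c * x)) = d * (e * (f * x)) := by
  rw [← mul_assoc, ← mul_assoc, h, mul_assoc, mul_assoc]

private lemma lcancel (i : Fin (n - 1)) {x y : IB n}
    (h : ibS n i * x = ibS n i * y) : x = y := by
  have h2 : ibSi n i * (ibS n i * x) = ibSi n i * (ibS n i * y) := by rw [h]
  rwa [← mul_assoc, ← mul_assoc, q_siS, one_mul, one_mul] at h2

/-- Transfer a commuting relation across the inverse generator. -/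
private lemma si_comm {a b : Fin n} {i : Fin (n - 1)}
    (h : ibE n b * ibS n i = ibS n i * ibE n a) :
    ibE n a * ibSi n i = ibSi n i * ibE n b := by
  calc ibE n a * ibSi n i
      = ibSi n i * ibS n i * (ibE n a * ibSi n i) := by rw [q_siS, one_mul]
    _ = ibSi n i * (ibS n i * ibE n a * ibSi n i) := by
        rw [mul_assoc (ibSi n i), ← mul_assoc (ibS n i)]
    _ = ibSi n i * (ibE n b * ibS n i * ibSi n i) := by rw [h]
    _ = ibSi n i * ibE n b := by rw [mul_assoc (ibE n b), q_Ssi, mul_one]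

/-- Adjacent idempotent generators commute. -/
private lemma e_adj (i : Fin (n - 1)) (a b : Fin n) (ha : (a : ℕ) = (i : ℕ))
    (hb : (b : ℕ) = (i : ℕ) + 1) : ibE n a * ibE n b = ibE n b * ibE n a := by
  have hEb : ibE n b = ibS n i * ibE n a * ibSi n i := by
    calc ibE n b = ibE n b * (ibS n i * ibSi n i) := by rw [q_Ssi, mul_one]
      _ = ibE n b * ibS n i * ibSi n i := by rw [mul_assoc]
      _ = ibS n i * ibE n a * ibSi n i := by rw [q_hi i a b ha hb]
  have hEa : ibE n a = ibS n i * ibE n b * ibSi n i := by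
    calc ibE n a = ibE n a * (ibS n i * ibSi n i) := by rw [q_Ssi, mul_one]
      _ = ibE n a * ibS n i * ibSi n i := by rw [mul_assoc]
      _ = ibS n i * ibE n b * ibSi n i := by rw [q_lo i a b ha hb]
  have key : ibE n a * ibE n b * ibSi n i = ibE n a * ibE n b := by
    calc ibE n a * ibE n b * ibSi n i
        = ibE n a * ibE n b * ibS n i * ibSi n i := by rw [q_eeS i a b ha hb]
      _ = ibE n a * ibE n b * (ibS n i * ibSi n i) := by rw [mul_assoc]
      _ = ibE n a * ibE n b := by rw [q_Ssi, mul_one]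
  symm
  calc ibE n b * ibE n a
      = ibS n i * ibE n a * ibSi n i * (ibS n i * ibE n b * ibSi n i) := by
        rw [← hEb, ← hEa]
    _ = ibS n i * ibE n a * (ibSi n i * ibS n i) * (ibE n b * ibSi n i) := by
        simp only [mul_assoc]
    _ = ibS n i * ibE n a * (ibE n b * ibSi n i) := by rw [q_siS, mul_one]
    _ = ibS n i * ibE n a * ibE n b * ibSi n i := by
        rw [mul_assoc (ibS n i * ibE n a)]
    _ = ibE n a * ibE n b * ibSi n i := by
        rw [q_See i a b ha hb]
    _ = ibE n a * ibE n b := key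

/-- A braid-type identity involving the inverse generators. -/
private lemma braid_inv (i' i : Fin (n - 1)) (h : (i' : ℕ) + 1 = (i : ℕ)) :
    ibSi n i * (ibSi n i' * ibS n i) = ibS n i' * (ibSi n i * ibSi n i') := by
  apply lcancel i
  apply lcancel i'
  calc ibS n i' * (ibS n i * (ibSi n i * (ibSi n i' * ibS n i)))
      = ibS n i' * (ibSi n i' * ibS n i) := by
        rw [← mul_assoc (ibS n i) (ibSi n i), q_Ssi, one_mul]
    _ = ibS n i := by rw [← mul_assoc, q_Ssi, one_mul]
    _ = ibS n i * ibS n i' * ibSi n i' := by rw [mul_assoc, q_Ssi, mul_one]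
    _ = ibS n i' * ibS n i * ibS n i' * (ibSi n i * ibSi n i') := by
        rw [q_braid i' i h, mul_assoc (ibS n i * ibS n i') (ibS n i),
          ← mul_assoc (ibS n i) (ibSi n i), q_Ssi, one_mul]
    _ = ibS n i' * (ibS n i * (ibS n i' * (ibSi n i * ibSi n i'))) := by
        simp only [mul_assoc]

/-- The derived commutation `ε_{i-1} σ_i = σ_i ε_{i-1}`. -/
private lemma e_near (i' i : Fin (n - 1)) (h : (i' : ℕ) + 1 = (i : ℕ))
    (a : Fin n) (ha : (a : ℕ) = (i' : ℕ)) :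
    ibE n a * ibS n i = ibS n i * ibE n a := by
  have hin : (i : ℕ) < n - 1 := i.isLt
  obtain ⟨c, hcval⟩ : ∃ c : Fin n, (c : ℕ) = (i : ℕ) := ⟨⟨(i : ℕ), by omega⟩, rfl⟩
  obtain ⟨d, hdval⟩ : ∃ d : Fin n, (d : ℕ) = (i : ℕ) + 1 :=
    ⟨⟨(i : ℕ) + 1, by omega⟩, rfl⟩
  have F1 : ibE n a * ibS n i' = ibS n i' * ibE n c := q_lo i' a c ha (by omega)
  have F2 : ibE n c * ibS n i = ibS n i * ibE n d := q_lo i c d hcval (by omega)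
  have F3 : ibE n d * ibS n i' = ibS n i' * ibE n d := q_far d i' (Or.inl (by omega))
  have hEc : ibE n c = ibS n i * (ibE n d * ibSi n i) := by
    calc ibE n c = ibE n c * (ibS n i * ibSi n i) := by rw [q_Ssi, mul_one]
      _ = ibE n c * ibS n i * ibSi n i := by rw [mul_assoc]
      _ = ibS n i * ibE n d * ibSi n i := by rw [F2]
      _ = _ := by rw [mul_assoc]
  have hEa : ibE n a = ibS n i' * (ibS n i * (ibE n d * (ibSi n i * ibSi n i'))) := by
    calc ibE n a = ibE n a * (ibS n i' * ibSi n i') := by rw [q_Ssi, mul_one]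
      _ = ibE n a * ibS n i' * ibSi n i' := by rw [mul_assoc]
      _ = ibS n i' * ibE n c * ibSi n i' := by rw [F1]
      _ = ibS n i' * (ibS n i * (ibE n d * ibSi n i)) * ibSi n i' := by rw [← hEc]
      _ = _ := by simp only [mul_assoc]
  have L : ibE n a * ibS n i =
      ibS n i' * (ibS n i * (ibE n d * (ibSi n i * (ibSi n i' * ibS n i)))) := by
    rw [hEa]; simp only [mul_assoc]
  have R : ibS n i * ibE n a =
      ibS n i' * (ibS n i * (ibE n d * (ibSi n i * (ibSi n i' * ibS n i)))) := by
    rw [hEa]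
    rw [← m33 (q_braid i' i h)]
    rw [m22 F3.symm]
    rw [← braid_inv i' i h]
  rw [L, R]

/-- `ε_a` commutes with `σ_i` whenever `a ∉ {i, i+1}`. -/
private lemma comm_off (a : Fin n) (i : Fin (n - 1)) (h1 : (a : ℕ) ≠ (i : ℕ))
    (h2 : (a : ℕ) ≠ (i : ℕ) + 1) : ibE n a * ibS n i = ibS n i * ibE n a := by
  by_cases hfar : (i : ℕ) + 2 ≤ (a : ℕ) ∨ (a : ℕ) + 2 ≤ (i : ℕ)
  · exact q_far a i hfar
  · have hlt := i.isLt
    obtain ⟨i', hi'val⟩ : ∃ i' : Fin (n - 1), (i' : ℕ) = (a : ℕ) :=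
      ⟨⟨(a : ℕ), by omega⟩, rfl⟩
    exact e_near i' i (by omega) a (by omega)

private lemma comm_off_si (a : Fin n) (i : Fin (n - 1)) (h1 : (a : ℕ) ≠ (i : ℕ))
    (h2 : (a : ℕ) ≠ (i : ℕ) + 1) : ibE n a * ibSi n i = ibSi n i * ibE n a :=
  si_comm (comm_off a i h1 h2)

private lemma e_comm_d : ∀ (d : ℕ) (a c : Fin n), (c : ℕ) = (a : ℕ) + d →
    ibE n a * ibE n c = ibE n c * ibE n a := by
  intro d
  induction d with
  | zero =>
    intro a c hc
    rw [show a = c from Fin.ext (by omega)]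
  | succ k ih =>
    intro a c hc
    have hcn := c.isLt
    rcases Nat.eq_zero_or_pos k with hk | hk
    · subst hk
      obtain ⟨i, hival⟩ : ∃ i : Fin (n - 1), (i : ℕ) = (a : ℕ) :=
        ⟨⟨(a : ℕ), by omega⟩, rfl⟩
      exact e_adj i a c hival.symm (by omega)
    · obtain ⟨i, hival⟩ : ∃ i : Fin (n - 1), (i : ℕ) = (c : ℕ) - 1 :=
        ⟨⟨(c : ℕ) - 1, by omega⟩, rfl⟩
      obtain ⟨c', hc'val⟩ : ∃ c' : Fin n, (c' : ℕ) = (c : ℕ) - 1 :=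
        ⟨⟨(c : ℕ) - 1, by omega⟩, rfl⟩
      have F : ibE n c' * ibS n i = ibS n i * ibE n c :=
        q_lo i c' c (by omega) (by omega)
      have hEc : ibE n c = ibSi n i * (ibE n c' * ibS n i) := by
        calc ibE n c = ibSi n i * ibS n i * ibE n c := by rw [q_siS, one_mul]
          _ = ibSi n i * (ibS n i * ibE n c) := by rw [mul_assoc]
          _ = _ := by rw [← F]
      have hcomm : ibE n a * ibS n i = ibS n i * ibE n a :=
        comm_off a i (by omega) (by omega)
      have hcommi : ibE n a * ibSi n i = ibSi n i * ibE n a := si_comm hcomm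
      have hIH : ibE n a * ibE n c' = ibE n c' * ibE n a := ih a c' (by omega)
      calc ibE n a * ibE n c
          = ibE n a * (ibSi n i * (ibE n c' * ibS n i)) := by rw [hEc]
        _ = ibSi n i * (ibE n a * (ibE n c' * ibS n i)) := by
            rw [← mul_assoc, hcommi, mul_assoc]
        _ = ibSi n i * (ibE n c' * (ibE n a * ibS n i)) := by
            rw [← mul_assoc (ibE n a), hIH, mul_assoc]
        _ = ibSi n i * (ibE n c' * (ibS n i * ibE n a)) := by rw [hcomm]
        _ = ibSi n i * (ibE n c' * ibS n i) * ibE n a := by simp only [mul_assoc]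
        _ = ibE n c * ibE n a := by rw [← hEc]

private lemma e_comm_all (a c : Fin n) : ibE n a * ibE n c = ibE n c * ibE n a := by
  rcases le_total (a : ℕ) (c : ℕ) with h | h
  · exact e_comm_d ((c : ℕ) - (a : ℕ)) a c (by omega)
  · exact (e_comm_d ((a : ℕ) - (c : ℕ)) c a (by omega)).symm

variable (τ : IB n →* PartialInj n)

/-- The single-generator case of the key commuting lemma. -/
private lemma gen_step
    (hτs : ∀ i : Fin (n - 1), τ (ibS n i) = swapPI n i)
    (hτsi : ∀ i : Fin (n - 1), τ (ibSi n i) = swapPI n i)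
    (hτe : ∀ a : Fin n, τ (ibE n a) = dropPI n a)
    (g : IBGen n) (c b : Fin n)
    (h : (τ (mkIB (FreeMonoid.of g))).toFun c = some b) :
    mkIB (FreeMonoid.of g) * ibE n c = ibE n b * mkIB (FreeMonoid.of g) := by
  cases g with
  | s i =>
    have hlt := i.isLt
    rw [show mkIB (FreeMonoid.of (IBGen.s i)) = ibS n i from rfl] at h ⊢
    rw [hτs i] at h
    have hb : swapPerm n i c = b := Option.some.inj h
    by_cases h1 : (c : ℕ) = (i : ℕ)
    · have hby : (b : ℕ) = (i : ℕ) + 1 := by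
        rw [← hb, show c = (⟨(i : ℕ), by omega⟩ : Fin n) from Fin.ext h1,
          show swapPerm n i ⟨(i : ℕ), by omega⟩ = (⟨(i : ℕ) + 1, by omega⟩ : Fin n)
            from Equiv.swap_apply_left _ _]
      exact (q_hi i c b h1 hby).symm
    · by_cases h2 : (c : ℕ) = (i : ℕ) + 1
      · have hby : (b : ℕ) = (i : ℕ) := by
          rw [← hb, show c = (⟨(i : ℕ) + 1, by omega⟩ : Fin n) from Fin.ext h2,
            show swapPerm n i ⟨(i : ℕ) + 1, by omega⟩ = (⟨(i : ℕ), by omega⟩ : Fin n)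
              from Equiv.swap_apply_right _ _]
        exact (q_lo i b c hby h2).symm
      · have hbc : b = c := by
          rw [← hb]
          exact Equiv.swap_apply_of_ne_of_ne
            (fun hx => h1 (congrArg Fin.val hx)) (fun hx => h2 (congrArg Fin.val hx))
        rw [hbc]
        exact (comm_off c i h1 h2).symm
  | si i =>
    have hlt := i.isLt
    rw [show mkIB (FreeMonoid.of (IBGen.si i)) = ibSi n i from rfl] at h ⊢
    rw [hτsi i] at h
    have hb : swapPerm n i c = b := Option.some.inj h
    by_cases h1 : (c : ℕ) = (i : ℕ)
    · have hby : (b : ℕ) = (i : ℕ) + 1 := by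
        rw [← hb, show c = (⟨(i : ℕ), by omega⟩ : Fin n) from Fin.ext h1,
          show swapPerm n i ⟨(i : ℕ), by omega⟩ = (⟨(i : ℕ) + 1, by omega⟩ : Fin n)
            from Equiv.swap_apply_left _ _]
      exact (si_comm (q_lo i c b h1 hby)).symm
    · by_cases h2 : (c : ℕ) = (i : ℕ) + 1
      · have hby : (b : ℕ) = (i : ℕ) := by
          rw [← hb, show c = (⟨(i : ℕ) + 1, by omega⟩ : Fin n) from Fin.ext h2,
            show swapPerm n i ⟨(i : ℕ) + 1, by omega⟩ = (⟨(i : ℕ), by omega⟩ : Fin n)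
              from Equiv.swap_apply_right _ _]
        exact (si_comm (q_hi i b c hby h2)).symm
      · have hbc : b = c := by
          rw [← hb]
          exact Equiv.swap_apply_of_ne_of_ne
            (fun hx => h1 (congrArg Fin.val hx)) (fun hx => h2 (congrArg Fin.val hx))
        rw [hbc]
        exact (comm_off_si c i h1 h2).symm
  | e x =>
    rw [show mkIB (FreeMonoid.of (IBGen.e x)) = ibE n x from rfl] at h ⊢
    rw [hτe x] at h
    have h' : (if c = x then none else some c) = some b := h
    by_cases hc : c = x
    · rw [if_pos hc] at h'
      exact absurd h' (by simp)
    · rw [if_neg hc] at h'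
      rw [← Option.some.inj h']
      exact e_comm_all x c

/-- The key commuting lemma on words. -/
private lemma word_comm
    (hτs : ∀ i : Fin (n - 1), τ (ibS n i) = swapPI n i)
    (hτsi : ∀ i : Fin (n - 1), τ (ibSi n i) = swapPI n i)
    (hτe : ∀ a : Fin n, τ (ibE n a) = dropPI n a)
    (w : FreeMonoid (IBGen n)) :
    ∀ a b : Fin n, (τ (mkIB w)).toFun a = some b →
      mkIB w * ibE n a = ibE n b * mkIB w := by
  induction w using FreeMonoid.inductionOn' with
  | one =>
    intro a b hab
    rw [mkIB_one] at hab ⊢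
    rw [map_one] at hab
    have h' : some a = some b := hab
    rw [one_mul, mul_one, Option.some.inj h']
  | of_mul g w' ih =>
    intro a b hab
    rw [mkIB_mul] at hab ⊢
    rw [map_mul] at hab
    have hab' : Option.bind ((τ (mkIB w')).toFun a)
        (τ (mkIB (FreeMonoid.of g))).toFun = some b := hab
    obtain ⟨c, hc1, hc2⟩ := Option.bind_eq_some_iff.mp hab'
    have hg := gen_step τ hτs hτsi hτe g c b hc2
    have hw := ih a c hc1
    calc mkIB (FreeMonoid.of g) * mkIB w' * ibE n a
        = mkIB (FreeMonoid.of g) * (mkIB w' * ibE n a) := by rw [mul_assoc]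
      _ = mkIB (FreeMonoid.of g) * (ibE n c * mkIB w') := by rw [hw]
      _ = mkIB (FreeMonoid.of g) * ibE n c * mkIB w' := by rw [mul_assoc]
      _ = ibE n b * mkIB (FreeMonoid.of g) * mkIB w' := by rw [hg]
      _ = ibE n b * (mkIB (FreeMonoid.of g) * mkIB w') := by rw [mul_assoc]

/-- The key commuting lemma: if `τ(m)(a) = b` then `m ε_a = ε_b m`. -/
private lemma main_comm
    (hτs : ∀ i : Fin (n - 1), τ (ibS n i) = swapPI n i)
    (hτsi : ∀ i : Fin (n - 1), τ (ibSi n i) = swapPI n i)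
    (hτe : ∀ a : Fin n, τ (ibE n a) = dropPI n a)
    (m : IB n) (a b : Fin n)
    (h : (τ m).toFun a = some b) : m * ibE n a = ibE n b * m := by
  revert h
  induction m using Con.induction_on
  next w => exact word_comm τ hτs hτsi hτe w a b

end IBAux

/-- In `IB_n`, for the canonical projection
`τ : IB_n → I_n` (determined by `τ(σ_i) = s_i`, `τ(σ_i⁻¹) = s_i`,
`τ(ε_a) = id∖{a}`), an element `m` satisfies `ε_i m = ε_i` if and only if
`m ε_{τ(m)(i)} = ε_{τ(m)(i)}`, whenever `τ(m)(i)` is defined. -/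
theorem ib_makanin_condition (n : ℕ) (τ : IB n →* PartialInj n)
    (hτs : ∀ i : Fin (n - 1), τ (ibS n i) = swapPI n i)
    (hτsi : ∀ i : Fin (n - 1), τ (ibSi n i) = swapPI n i)
    (hτe : ∀ a : Fin n, τ (ibE n a) = dropPI n a)
    (m : IB n) (i j : Fin n) (hij : (τ m).toFun i = some j) :
    ibE n i * m = ibE n i ↔ m * ibE n j = ibE n j := by
  constructor
  · intro hEm
    have h1 := congrArg τ hEm
    rw [map_mul, hτe] at h1
    have h2 : Option.bind ((τ m).toFun i) (dropPI n i).toFun = (dropPI n i).toFun i :=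
      congrArg (fun p : PartialInj n => p.toFun i) h1
    rw [hij] at h2
    have h3 : (dropPI n i).toFun j = (dropPI n i).toFun i := h2
    have hji : j = i := by
      by_contra hne
      rw [show (dropPI n i).toFun j = some j from if_neg hne,
        show (dropPI n i).toFun i = none from if_pos rfl] at h3
      exact Option.some_ne_none j h3
    rw [hji] at hij ⊢
    have hcm := IBAux.main_comm τ hτs hτsi hτe m i i hij
    rw [hcm, hEm]
  · intro hmE
    have hji : i = j := by
      by_contra hne
      have h1 := congrArg τ hmE
      rw [map_mul, hτe] at h1
      have h2 : Option.bind ((dropPI n j).toFun i) (τ m).toFun = (dropPI n j).toFun i :=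
        congrArg (fun p : PartialInj n => p.toFun i) h1
      rw [show (dropPI n j).toFun i = some i from if_neg hne] at h2
      have h3 : (τ m).toFun i = some i := h2
      rw [hij] at h3
      exact hne (Option.some.inj h3).symm
    rw [← hji] at hij hmE
    have hcm := IBAux.main_comm τ hτs hτsi hτe m i i hij
    rw [← hcm, hmE]
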